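/- For all positive reals t and α with α ≥ (1+√5)/2, and all natural numbers n ≥ 1, we have ⌊tα^n⌋ + ⌊tα^(n+1)⌋ ≤ ⌊tα^(n+2)⌋. -/
import Mathlib

theorem stmt_0 (t α : ℝ) (ht : 0 < t) (hα : (1 + Real.sqrt 5) / 2 ≤ α)
    (n : ℕ) (hn : 1 ≤ n) :
    ⌊t * α ^ n⌋ + ⌊t * α ^ (n + 1)⌋ ≤ ⌊t * α ^ (n + 2)⌋ := by
  have h5 : Real.sqrt 5 ^ 2 = 5 := Real.sq_sqrt (by norm_num)
  have h5n : (0:ℝ) ≤ Real.sqrt 5 := Real.sqrt_nonneg 5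
  have hα1 : α + 1 ≤ α ^ 2 := by nlinarith
  have hαpos : 0 < α := by nlinarith
  have hpow : (0:ℝ) < α ^ n := pow_pos hαpos n
  have key : t * α ^ n + t * α ^ (n + 1) ≤ t * α ^ (n + 2) := by
    have : α ^ (n + 2) = α ^ n * α ^ 2 := by ring
    have h2 : α ^ (n + 1) = α ^ n * α := by ring
    rw [this, h2]
    nlinarith [mul_le_mul_of_nonneg_left hα1 (le_of_lt (mul_pos ht hpow))]
  calc ⌊t * α ^ n⌋ + ⌊t * α ^ (n + 1)⌋ ≤ ⌊t * α ^ n + t * α ^ (n + 1)⌋ := by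
        exact_mod_cast Int.le_floor.2 (by
          push_cast
          exact add_le_add (Int.floor_le _) (Int.floor_le _))
      _ ≤ ⌊t * α ^ (n + 2)⌋ := Int.floor_mono key
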